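/- arXiv:1406.2088 — 2 statements merged into one kernel-verified Lean document; each statement's English description precedes it below -/
import Mathlib

section
/- Let f ∈ H²(𝕋²) and fix n ≥ 1. For every ε > 0 there exists δ ∈ (0,1) such that for ALL choices of a₁,...,a_{n−1}, b₁,...,b_{n−1} ∈ 𝔻 and all a_n, b_n ∈ 𝔻 with |a_n| > 1−δ and |b_n| > 1−δ, the n-th partial sum difference satisfies ‖D_n(f)‖² = Σ_{max(k,l)=n} |⟨f, B_k^a ⊗ B_l^b⟩|² < ε. -/
open MeasureTheory Real Complex Filter Finset

set_option maxHeartbeats 3000000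

noncomputable section

/-- The point `e^{it}` on the unit circle. -/
def bp (t : ℝ) : ℂ := Complex.exp (Complex.I * t)

/-- The product measure on `(-π,π] × (-π,π]` modelling the 2-torus. -/
def torusMeasure : Measure (ℝ × ℝ) :=
  (volume.restrict (Set.Ioc (-π) π)).prod (volume.restrict (Set.Ioc (-π) π))

/-- The `L²(𝕋²)` inner product. -/
def innerT2 (f g : ℝ × ℝ → ℂ) : ℂ :=
  (1 / (4 * (π : ℂ) ^ 2)) *
    ∫ t in (-π)..π, ∫ s in (-π)..π, f (t, s) * (starRingEnd ℂ) (g (t, s))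

/-- The squared `L²(𝕋²)` norm. -/
def normT2Sq (f : ℝ × ℝ → ℂ) : ℝ :=
  (1 / (4 * π ^ 2)) * ∫ t in (-π)..π, ∫ s in (-π)..π, ‖f (t, s)‖ ^ 2

/-- The double Fourier coefficient `c_{kl}`. -/
def fourierCoeff2 (f : ℝ × ℝ → ℂ) (k l : ℤ) : ℂ :=
  innerT2 f (fun x => Complex.exp (Complex.I * ((k : ℂ) * x.1 + (l : ℂ) * x.2)))

/-- Membership in `H²(𝕋²)`: square integrable, and the Fourier coefficients vanish
unless both indices are nonnegative. -/
def MemH2T2 (f : ℝ × ℝ → ℂ) : Prop :=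
  MemLp f 2 torusMeasure ∧ ∀ k l : ℤ, (k < 0 ∨ l < 0) → fourierCoeff2 f k l = 0

/-- The normalized Szegő kernel. -/
def szego (a z : ℂ) : ℂ := (Real.sqrt (1 - ‖a‖ ^ 2) : ℂ) / (1 - (starRingEnd ℂ) a * z)

/-- The Takenaka–Malmquist system generated by `a` (0-based: `TM a n` is `B_{n+1}`). -/
def TM (a : ℕ → ℂ) (n : ℕ) (z : ℂ) : ℂ :=
  szego (a n) z * ∏ l ∈ Finset.range n, ((z - a l) / (1 - (starRingEnd ℂ) (a l) * z))

/-- Boundary values of the product TM system on the 2-torus. -/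
def TMprod (a b : ℕ → ℂ) (k l : ℕ) : ℝ × ℝ → ℂ :=
  fun x => TM a k (bp x.1) * TM b l (bp x.2)

/-- Boundary values of the product Szegő kernel `e_a ⊗ e_b` on the 2-torus. -/
def szegoProd (a b : ℂ) : ℝ × ℝ → ℂ :=
  fun x => szego a (bp x.1) * szego b (bp x.2)

/-- `‖D_n(f)‖² = Σ_{max(k,l)=n} |⟨f, B_k^a ⊗ B_l^b⟩|²` (0-based: the paper's index `n`
corresponds to pairs `(k,l)` with `max k l = n - 1`, `k, l < n`). -/
def DnSq (f : ℝ × ℝ → ℂ) (a b : ℕ → ℂ) (n : ℕ) : ℝ :=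
  ∑ p ∈ (Finset.range n ×ˢ Finset.range n).filter (fun p => max p.1 p.2 = n - 1),
    ‖innerT2 f (TMprod a b p.1 p.2)‖ ^ 2

def μ1 : Measure ℝ := volume.restrict (Set.Ioc (-π) π)

lemma neg_pi_le_pi : (-π : ℝ) ≤ π := by linarith [pi_pos]

instance : IsFiniteMeasure μ1 := by
  constructor
  rw [μ1, Measure.restrict_apply_univ]
  exact measure_Ioc_lt_top

lemma torus_eq : torusMeasure = μ1.prod μ1 := rfl

instance : IsFiniteMeasure torusMeasure := by
  rw [torus_eq]; infer_instance

lemma norm_bp (t : ℝ) : ‖bp t‖ = 1 := by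
  rw [bp, mul_comm]
  exact Complex.norm_exp_ofReal_mul_I t

lemma continuous_bp : Continuous bp := by
  unfold bp; fun_prop

lemma bp_pow (t : ℝ) (j : ℕ) : bp t ^ j = Complex.exp (Complex.I * j * t) := by
  rw [bp, ← Complex.exp_nat_mul]; ring_nf

lemma conj_bp_pow (t : ℝ) (j : ℕ) :
    (starRingEnd ℂ) (bp t ^ j) = Complex.exp (-(Complex.I * j * t)) := by
  rw [bp_pow, ← Complex.exp_conj]
  congr 1
  simp [Complex.conj_I]

/-- The basic exponential integral. -/
lemma integral_exp_int (d : ℤ) :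
    ∫ t, Complex.exp (Complex.I * d * t) ∂μ1 = if d = 0 then (2 * π : ℂ) else 0 := by
  rw [μ1]
  rw [show (∫ t in Set.Ioc (-π) π, Complex.exp (Complex.I * d * t) ∂volume)
      = ∫ t in (-π)..π, Complex.exp (Complex.I * d * t) from
    (intervalIntegral.integral_of_le neg_pi_le_pi).symm]
  rcases eq_or_ne d 0 with h | h
  · simp only [h, if_pos rfl]
    simp only [Int.cast_zero, mul_zero, zero_mul, Complex.exp_zero]
    rw [intervalIntegral.integral_const]
    push_cast
    ring_nf
    simp
  · rw [if_neg h]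
    have hc : (Complex.I * d) ≠ 0 := by
      simp [Complex.I_ne_zero, Int.cast_injective.ne_iff]
      exact_mod_cast h
    have := integral_exp_mul_complex (a := (-π)) (b := π) hc
    simp only [mul_assoc] at this ⊢
    rw [this]
    have key : Complex.exp (Complex.I * (d * π)) = Complex.exp (Complex.I * (d * (-π : ℝ))) := by
      rw [show (Complex.I * (d * ((-π : ℝ) : ℂ))) = Complex.I * (d * (π:ℝ)) + (-d) * (2 * π * Complex.I) by push_cast; ring]
      rw [Complex.exp_add]
      rw [show ((-d : ℂ)) = ((-d : ℤ) : ℂ) by push_cast; ring]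
      rw [Complex.exp_int_mul_two_pi_mul_I]
      ring
    rw [key, sub_self, zero_div]

-- ### coefficient machinery

/-- `g` has the absolutely convergent Fourier expansion `c` on the circle. -/
def ExpOn (g : ℝ → ℂ) (c : ℕ → ℂ) : Prop :=
  Summable (fun j => ‖c j‖) ∧ ∀ t : ℝ, g t = ∑' j, c j * bp t ^ j

/-- Szegő kernel coefficients. -/
def sC (a : ℂ) (j : ℕ) : ℂ := (Real.sqrt (1 - ‖a‖ ^ 2) : ℂ) * ((starRingEnd ℂ) a) ^ j

/-- Blaschke factor coefficients. -/
def bC (a : ℂ) : ℕ → ℂ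
  | 0 => -a
  | (j+1) => ((1 : ℂ) - (‖a‖ ^ 2 : ℝ)) * ((starRingEnd ℂ) a) ^ j

/-- Cauchy product. -/
def convC (c d : ℕ → ℂ) (j : ℕ) : ℂ := ∑ p ∈ Finset.HasAntidiagonal.antidiagonal j, c p.1 * d p.2

def bl (a z : ℂ) : ℂ := (z - a) / (1 - (starRingEnd ℂ) a * z)

def prodC (a : ℕ → ℂ) : ℕ → ℕ → ℂ
  | 0 => fun j => if j = 0 then 1 else 0
  | (k+1) => convC (prodC a k) (bC (a k))

def tmC (a : ℕ → ℂ) (k : ℕ) : ℕ → ℂ := convC (sC (a k)) (prodC a k)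

lemma norm_sC (a : ℂ) (j : ℕ) : ‖sC a j‖ = Real.sqrt (1 - ‖a‖ ^ 2) * ‖a‖ ^ j := by
  unfold sC
  rw [norm_mul, norm_pow, RCLike.norm_conj, Complex.norm_real, Real.norm_eq_abs,
    _root_.abs_of_nonneg (Real.sqrt_nonneg _)]

lemma summable_norm_sC {a : ℂ} (ha : ‖a‖ < 1) : Summable (fun j => ‖sC a j‖) := by
  simp only [norm_sC]
  exact (summable_geometric_of_lt_one (norm_nonneg a) ha).mul_left _

lemma one_sub_conj_mul_ne {a z : ℂ} (ha : ‖a‖ < 1) (hz : ‖z‖ = 1) :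
    1 - (starRingEnd ℂ) a * z ≠ 0 := by
  intro h
  have : ‖(starRingEnd ℂ) a * z‖ = 1 := by
    have : (starRingEnd ℂ) a * z = 1 := by linear_combination -h
    rw [this, norm_one]
  rw [norm_mul, RCLike.norm_conj, hz, mul_one] at this
  exact absurd this (ne_of_lt ha)

lemma norm_one_sub_conj_mul_ge {a z : ℂ} (hz : ‖z‖ = 1) :
    1 - ‖a‖ ≤ ‖1 - (starRingEnd ℂ) a * z‖ := by
  calc 1 - ‖a‖ = ‖(1:ℂ)‖ - ‖(starRingEnd ℂ) a * z‖ := by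
        rw [norm_one, norm_mul, RCLike.norm_conj, hz, mul_one]
    _ ≤ _ := norm_sub_norm_le _ _

lemma expOn_szego {a : ℂ} (ha : ‖a‖ < 1) : ExpOn (fun t => szego a (bp t)) (sC a) := by
  refine ⟨summable_norm_sC ha, fun t => ?_⟩
  have hw : ‖(starRingEnd ℂ) a * bp t‖ < 1 := by
    rw [norm_mul, RCLike.norm_conj, norm_bp, mul_one]; exact ha
  have hgeom := tsum_geometric_of_norm_lt_one hw
  show (Real.sqrt (1 - ‖a‖ ^ 2) : ℂ) / (1 - (starRingEnd ℂ) a * bp t) = _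
  rw [div_eq_mul_inv, ← hgeom, ← tsum_mul_left]
  congr 1; ext j
  unfold sC
  rw [mul_pow]; ring

lemma expOn_mul {g h : ℝ → ℂ} {c d : ℕ → ℂ} (hg : ExpOn g c) (hh : ExpOn h d) :
    ExpOn (fun t => g t * h t) (convC c d) := by
  constructor
  · exact summable_norm_sum_mul_antidiagonal_of_summable_norm hg.1 hh.1
  · intro t
    have hgs : Summable fun j => ‖c j * bp t ^ j‖ := by
      simp only [norm_mul, norm_pow, norm_bp, one_pow, mul_one]
      exact hg.1
    have hhs : Summable fun j => ‖d j * bp t ^ j‖ := by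
      simp only [norm_mul, norm_pow, norm_bp, one_pow, mul_one]
      exact hh.1
    show g t * h t = _
    rw [hg.2 t, hh.2 t,
      tsum_mul_tsum_eq_tsum_sum_antidiagonal_of_summable_norm hgs hhs]
    congr 1; ext n
    unfold convC
    rw [Finset.sum_mul]
    apply Finset.sum_congr rfl
    intro p hp
    have : p.1 + p.2 = n := Finset.HasAntidiagonal.mem_antidiagonal.1 hp
    rw [← this, pow_add]; ring

lemma expOn_one : ExpOn (fun _ => 1) (fun j => if j = 0 then 1 else 0) := by
  constructor
  · apply summable_of_ne_finset_zero (s := {0})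
    intro j hj
    simp only [Finset.mem_singleton] at hj
    simp [hj]
  · intro t
    rw [tsum_eq_single 0 (by intro j hj; simp [hj])]
    simp

lemma expOn_bl {a : ℂ} (ha : ‖a‖ < 1) : ExpOn (fun t => bl a (bp t)) (bC a) := by
  have hsum : Summable (fun j => ‖bC a j‖) := by
    have h1 : Summable (fun j => ‖bC a (j+1)‖) := by
      refine Summable.of_nonneg_of_le (fun j => norm_nonneg _) ?_
        ((summable_geometric_of_lt_one (norm_nonneg a) ha).mul_left 2)
      intro j
      rw [show bC a (j+1) = ((1 : ℂ) - (‖a‖ ^ 2 : ℝ)) * ((starRingEnd ℂ) a) ^ j from rfl,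
        norm_mul, norm_pow, RCLike.norm_conj]
      have h1 : ‖(1 : ℂ) - ((‖a‖ ^ 2 : ℝ) : ℂ)‖ ≤ 2 := by
        rw [show ((1 : ℂ) - ((‖a‖ ^ 2 : ℝ) : ℂ)) = (((1 - ‖a‖ ^ 2 : ℝ)) : ℂ) by push_cast; ring,
          Complex.norm_real, Real.norm_eq_abs,
          _root_.abs_of_nonneg (by nlinarith [norm_nonneg a])]
        nlinarith [norm_nonneg a]
      have h2 : (0:ℝ) ≤ ‖a‖ ^ j := pow_nonneg (norm_nonneg a) j
      nlinarith
    exact (summable_nat_add_iff 1).1 h1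
  refine ⟨hsum, fun t => ?_⟩
  set z := bp t with hz
  have hz1 : ‖z‖ = 1 := norm_bp t
  have hw : ‖(starRingEnd ℂ) a * z‖ < 1 := by
    rw [norm_mul, RCLike.norm_conj, hz1, mul_one]; exact ha
  have hne := one_sub_conj_mul_ne ha hz1
  have hc : ((‖a‖ ^ 2 : ℝ) : ℂ) = a * (starRingEnd ℂ) a := by
    rw [Complex.mul_conj, Complex.normSq_eq_norm_sq]
  have key : bl a z = -a + ((1 : ℂ) - (‖a‖ ^ 2 : ℝ)) * z * (1 - (starRingEnd ℂ) a * z)⁻¹ := by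
    unfold bl
    rw [div_eq_iff hne, hc]
    linear_combination (-((1 - a * (starRingEnd ℂ) a) * z)) * inv_mul_cancel₀ hne
  have hsum' : Summable (fun j => bC a j * z ^ j) := by
    apply Summable.of_norm
    simpa [norm_mul, norm_pow, hz1] using hsum
  show bl a z = _
  rw [hsum'.tsum_eq_zero_add, key]
  congr 1
  · simp [bC]
  · have hgeom := tsum_geometric_of_norm_lt_one hw
    rw [← hgeom, ← tsum_mul_left]
    congr 1; ext j
    rw [show bC a (j+1) = ((1 : ℂ) - (‖a‖ ^ 2 : ℝ)) * ((starRingEnd ℂ) a) ^ j from rfl, mul_pow, pow_succ]; ring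

lemma expOn_blProd {a : ℕ → ℂ} {k : ℕ} (ha : ∀ i < k, ‖a i‖ < 1) :
    ExpOn (fun t => ∏ l ∈ Finset.range k, bl (a l) (bp t)) (prodC a k) := by
  induction k with
  | zero => simpa [prodC] using expOn_one
  | succ k ih =>
    have h1 : ExpOn (fun t => ∏ l ∈ Finset.range k, bl (a l) (bp t)) (prodC a k) :=
      ih (fun i hi => ha i (hi.trans (Nat.lt_succ_self k)))
    have h2 : ExpOn (fun t => bl (a k) (bp t)) (bC (a k)) :=
      expOn_bl (ha k (Nat.lt_succ_self k))
    have := expOn_mul h1 h2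
    simp only [prodC]
    convert this using 2 with t
    rw [Finset.prod_range_succ]

lemma TM_eq_szego_mul (a : ℕ → ℂ) (k : ℕ) (z : ℂ) :
    TM a k z = szego (a k) z * ∏ l ∈ Finset.range k, bl (a l) z := rfl

lemma expOn_TM {a : ℕ → ℂ} {k : ℕ} (ha : ∀ i ≤ k, ‖a i‖ < 1) :
    ExpOn (fun t => TM a k (bp t)) (tmC a k) := by
  have h1 := expOn_szego (ha k le_rfl)
  have h2 := expOn_blProd (a := a) (k := k) (fun i hi => ha i hi.le)
  have := expOn_mul h1 h2
  exact this

-- ### integral swap helper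

lemma my_integral_tsum {α : Type*} [MeasurableSpace α] {μ : Measure α} {ι : Type*} [Countable ι]
    (F : ι → α → ℂ) (hF : ∀ i, AEStronglyMeasurable (F i) μ)
    (b : ι → ℝ) (hb : Summable b) (hb0 : ∀ i, 0 ≤ b i)
    (g : α → ℝ) (hg : Integrable g μ) (hg0 : ∀ x, 0 ≤ g x)
    (hFb : ∀ i x, ‖F i x‖ ≤ b i * g x) :
    ∫ x, ∑' i, F i x ∂μ = ∑' i, ∫ x, F i x ∂μ := by
  refine integral_tsum hF ?_
  have key : ∀ i, (∫⁻ x, ‖F i x‖₊ ∂μ) ≤ ENNReal.ofReal (b i) * ENNReal.ofReal (∫ x, g x ∂μ) := by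
    intro i
    calc (∫⁻ x, ‖F i x‖₊ ∂μ) ≤ ∫⁻ x, ENNReal.ofReal (b i * g x) ∂μ := by
          apply lintegral_mono
          intro x
          dsimp only
          rw [← enorm_eq_nnnorm, ← ofReal_norm]
          exact ENNReal.ofReal_le_ofReal (hFb i x)
      _ = ENNReal.ofReal (b i) * ∫⁻ x, ENNReal.ofReal (g x) ∂μ := by
          rw [← lintegral_const_mul' _ _ ENNReal.ofReal_ne_top]
          congr 1; ext x
          rw [ENNReal.ofReal_mul (hb0 i)]
      _ ≤ ENNReal.ofReal (b i) * ENNReal.ofReal (∫ x, g x ∂μ) := by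
          rw [MeasureTheory.ofReal_integral_eq_lintegral_ofReal hg
            (Filter.Eventually.of_forall hg0)]
  refine ne_top_of_le_ne_top ?_ (ENNReal.tsum_le_tsum key)
  rw [ENNReal.tsum_mul_right]
  exact ENNReal.mul_ne_top (by
    rw [← ENNReal.ofReal_tsum_of_nonneg hb0 hb]; exact ENNReal.ofReal_ne_top)
    ENNReal.ofReal_ne_top

lemma μ1_univ : μ1 Set.univ = ENNReal.ofReal (2 * π) := by
  rw [μ1, Measure.restrict_apply_univ, Real.volume_Ioc]
  congr 1; ring

lemma integrable_of_bdd {α : Type*} [MeasurableSpace α] {μ : Measure α} [IsFiniteMeasure μ]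
    {E : Type*} [NormedAddCommGroup E] {f : α → E}
    (hm : AEStronglyMeasurable f μ) (C : ℝ) (hC : ∀ x, ‖f x‖ ≤ C) : Integrable f μ :=
  ⟨hm, MeasureTheory.HasFiniteIntegral.of_bounded (Filter.Eventually.of_forall hC)⟩

lemma ExpOn.continuous {g : ℝ → ℂ} {c : ℕ → ℂ} (h : ExpOn g c) : Continuous g := by
  rw [show g = fun t => ∑' j, c j * bp t ^ j from funext h.2]
  refine continuous_tsum (fun j => continuous_const.mul (continuous_bp.pow _)) h.1 ?_
  intro j t
  rw [norm_mul, norm_pow, norm_bp, one_pow, mul_one]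

lemma ExpOn.norm_le {g : ℝ → ℂ} {c : ℕ → ℂ} (h : ExpOn g c) (t : ℝ) :
    ‖g t‖ ≤ ∑' j, ‖c j‖ := by
  rw [h.2 t]
  refine (norm_tsum_le_tsum_norm ?_).trans ?_
  · simp only [norm_mul, norm_pow, norm_bp, one_pow, mul_one]
    exact h.1
  · simp only [norm_mul, norm_pow, norm_bp, one_pow, mul_one]
    exact le_rfl

lemma mul_conj_eq_sq (z : ℂ) : z * (starRingEnd ℂ) z = ((‖z‖ ^ 2 : ℝ) : ℂ) := by
  rw [Complex.mul_conj]
  norm_cast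
  rw [Complex.normSq_eq_norm_sq]

-- ### Parseval

lemma parseval {g : ℝ → ℂ} {c : ℕ → ℂ} (h : ExpOn g c) :
    ∫ t, ‖g t‖ ^ 2 ∂μ1 = 2 * π * ∑' j, ‖c j‖ ^ 2 := by
  have hsumsq : Summable (fun j => ‖c j‖ ^ 2) := by
    refine Summable.of_nonneg_of_le (fun j => sq_nonneg _) ?_ (h.1.mul_left (∑' j, ‖c j‖))
    intro j
    rw [sq]
    exact mul_le_mul_of_nonneg_right (Summable.le_tsum h.1 j (fun _ _ => norm_nonneg _)) (norm_nonneg _)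
  set F : ℕ × ℕ → ℝ → ℂ :=
    fun p t => (c p.1 * bp t ^ p.1) * (starRingEnd ℂ) (c p.2 * bp t ^ p.2) with hF
  have hpoint : ∀ t, g t * (starRingEnd ℂ) (g t) = ∑' p : ℕ × ℕ, F p t := by
    intro t
    rw [h.2 t]
    have hs : Summable fun j => ‖c j * bp t ^ j‖ := by
      simp only [norm_mul, norm_pow, norm_bp, one_pow, mul_one]; exact h.1
    have hs' : Summable fun j => ‖(starRingEnd ℂ) (c j * bp t ^ j)‖ := by
      simpa only [RCLike.norm_conj] using hs
    rw [← tsum_mul_tsum_of_summable_norm hs hs']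
    congr 1
    exact tsum_star (f := fun j => c j * bp t ^ j)
  have hmeas : ∀ p : ℕ × ℕ, AEStronglyMeasurable (F p) μ1 := by
    intro p
    apply Continuous.aestronglyMeasurable
    apply Continuous.mul
    · exact continuous_const.mul (continuous_bp.pow _)
    · exact Complex.continuous_conj.comp (continuous_const.mul (continuous_bp.pow _))
  have hbd : ∀ (p : ℕ × ℕ) (t : ℝ), ‖F p t‖ ≤ ‖c p.1‖ * ‖c p.2‖ * (1 : ℝ) := by
    intro p t
    rw [show F p t = (c p.1 * bp t ^ p.1) * (starRingEnd ℂ) (c p.2 * bp t ^ p.2) from rfl]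
    simp only [norm_mul, norm_pow, norm_bp, RCLike.norm_conj, one_pow, mul_one]
    exact le_rfl
  have hbsum : Summable (fun p : ℕ × ℕ => ‖c p.1‖ * ‖c p.2‖) :=
    h.1.mul_of_nonneg h.1 (by intro j; exact norm_nonneg _) (by intro j; exact norm_nonneg _)
  have hswap := my_integral_tsum F hmeas _ hbsum
    (fun p => mul_nonneg (norm_nonneg _) (norm_nonneg _)) (fun _ => (1 : ℝ))
    (integrable_const 1) (fun _ => zero_le_one) hbd
  have hterm : ∀ p : ℕ × ℕ,
      ∫ t, F p t ∂μ1 = if p.1 = p.2 then (2 * π : ℂ) * (c p.1 * (starRingEnd ℂ) (c p.1)) else 0 := by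
    intro p
    have hFt : ∀ t : ℝ, F p t = (c p.1 * (starRingEnd ℂ) (c p.2)) *
        Complex.exp (Complex.I * (((p.1 : ℤ) - (p.2 : ℤ) : ℤ) : ℂ) * (t : ℝ)) := by
      intro t
      have he : Complex.exp (Complex.I * (p.1 : ℂ) * (t : ℝ)) *
          Complex.exp (-(Complex.I * (p.2 : ℂ) * (t : ℝ)))
          = Complex.exp (Complex.I * (((p.1 : ℤ) - (p.2 : ℤ) : ℤ) : ℂ) * (t : ℝ)) := by
        rw [← Complex.exp_add]
        congr 1
        push_cast
        ring
      rw [show F p t = (c p.1 * bp t ^ p.1) * (starRingEnd ℂ) (c p.2 * bp t ^ p.2) from rfl,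
        map_mul, conj_bp_pow, bp_pow, ← he]
      ring
    rw [integral_congr_ae (Filter.Eventually.of_forall hFt), integral_const_mul,
      integral_exp_int]
    have hiff : ((p.1 : ℤ) - (p.2 : ℤ) = 0) ↔ p.1 = p.2 := by omega
    rcases eq_or_ne p.1 p.2 with hpq | hpq
    · rw [if_pos (hiff.2 hpq), if_pos hpq, ← hpq]
      ring
    · rw [if_neg (fun hh => hpq (hiff.1 hh)), if_neg hpq, mul_zero]
  have hdiag : ∑' p : ℕ × ℕ, (∫ t, F p t ∂μ1)
      = (2 * π : ℂ) * ∑' j : ℕ, (c j * (starRingEnd ℂ) (c j)) := by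
    rw [← tsum_mul_left]
    set G : ℕ → ℂ := fun j => (2 * π : ℂ) * (c j * (starRingEnd ℂ) (c j)) with hG
    refine tsum_eq_tsum_of_ne_zero_bij (fun j => ((j.1 : ℕ), (j.1 : ℕ))) ?_ ?_ ?_
    · intro x y hxy
      have : (x : ℕ) = (y : ℕ) := by simpa [Prod.ext_iff] using congrArg Prod.fst hxy
      exact Subtype.ext this
    · intro p hp
      rw [Function.mem_support, hterm] at hp
      have hd : p.1 = p.2 := by
        by_contra hne
        rw [if_neg hne] at hp
        exact hp rfl
      have hmem : p.1 ∈ Function.support G := by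
        rw [Function.mem_support]
        rw [if_pos hd] at hp
        exact hp
      exact ⟨⟨p.1, hmem⟩, by rw [Prod.ext_iff]; exact ⟨rfl, hd⟩⟩
    · intro j
      rw [hterm]
      simp
  have hC : (∫ t, g t * (starRingEnd ℂ) (g t) ∂μ1)
      = (2 * π : ℂ) * ∑' j : ℕ, (c j * (starRingEnd ℂ) (c j)) := by
    rw [integral_congr_ae (Filter.Eventually.of_forall hpoint), hswap, hdiag]
  rw [integral_congr_ae (Filter.Eventually.of_forall (fun t => mul_conj_eq_sq (g t)))] at hC
  have hgc : Continuous g := ExpOn.continuous h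
  have hir : Integrable (fun t => ‖g t‖ ^ 2) μ1 := by
    refine integrable_of_bdd ((hgc.norm.pow 2).aestronglyMeasurable) ((∑' j, ‖c j‖) ^ 2) ?_
    intro t
    rw [Real.norm_eq_abs, _root_.abs_of_nonneg (sq_nonneg _)]
    exact pow_le_pow_left₀ (norm_nonneg _) (ExpOn.norm_le h t) 2
  have hcomm := ContinuousLinearMap.integral_comp_comm Complex.ofRealCLM hir
  rw [show (fun a : ℝ => ((‖g a‖ ^ 2 : ℝ) : ℂ)) = (fun a => Complex.ofRealCLM (‖g a‖ ^ 2))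
    from rfl] at hC
  rw [hcomm, Complex.ofRealCLM_apply] at hC
  have h2 : ∑' j : ℕ, (c j * (starRingEnd ℂ) (c j)) = ((∑' j, ‖c j‖ ^ 2 : ℝ) : ℂ) := by
    rw [show (fun j => c j * (starRingEnd ℂ) (c j)) = fun j => ((‖c j‖ ^ 2 : ℝ) : ℂ) by
      ext j; exact mul_conj_eq_sq (c j)]
    exact (Complex.ofRealCLM.map_tsum hsumsq).symm
  rw [h2] at hC
  exact_mod_cast hC

-- ### pointwise moduli

lemma norm_bl_eq_one {a z : ℂ} (ha : ‖a‖ < 1) (hz : ‖z‖ = 1) : ‖bl a z‖ = 1 := by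
  have hne : (1 : ℂ) - (starRingEnd ℂ) a * z ≠ 0 := one_sub_conj_mul_ne ha hz
  have hzne : z ≠ 0 := by intro hz0; rw [hz0, norm_zero] at hz; norm_num at hz
  have key : ‖(1 : ℂ) - (starRingEnd ℂ) a * z‖ = ‖z - a‖ := by
    have : (starRingEnd ℂ) z * ((1 : ℂ) - (starRingEnd ℂ) a * z) = (starRingEnd ℂ) (z - a) := by
      rw [map_sub]
      have hzz : (starRingEnd ℂ) z * z = ((‖z‖ ^ 2 : ℝ) : ℂ) := by
        rw [mul_comm]; exact mul_conj_eq_sq z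
      rw [mul_sub, mul_one]
      rw [show (starRingEnd ℂ) z * ((starRingEnd ℂ) a * z) =
        (starRingEnd ℂ) a * ((starRingEnd ℂ) z * z) by ring, hzz, hz]
      push_cast
      ring
    have h2 := congrArg norm this
    rw [norm_mul, RCLike.norm_conj, RCLike.norm_conj, hz, one_mul] at h2
    exact h2
  have hnz : ‖z - a‖ ≠ 0 := by rw [← key]; exact norm_ne_zero_iff.2 hne
  unfold bl
  rw [norm_div, key, div_self hnz]

lemma norm_TM_eq (a : ℕ → ℂ) (k : ℕ) {z : ℂ} (ha : ∀ i < k, ‖a i‖ < 1) (hz : ‖z‖ = 1) :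
    ‖TM a k z‖ = ‖szego (a k) z‖ := by
  rw [TM_eq_szego_mul, norm_mul, norm_prod]
  rw [Finset.prod_congr rfl (fun i hi => norm_bl_eq_one (ha i (Finset.mem_range.1 hi)) hz)]
  simp

-- ### coefficient facts

lemma tsum_sq_sC {a : ℂ} (ha : ‖a‖ < 1) : ∑' j, ‖sC a j‖ ^ 2 = 1 := by
  have h2 : ‖a‖ ^ 2 < 1 := by nlinarith [norm_nonneg a]
  have : ∀ j : ℕ, ‖sC a j‖ ^ 2 = (1 - ‖a‖ ^ 2) * (‖a‖ ^ 2) ^ j := by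
    intro j
    rw [norm_sC, mul_pow, ← pow_mul, ← pow_mul, mul_comm j 2,
      Real.sq_sqrt (by nlinarith [norm_nonneg a])]
  rw [show (fun j => ‖sC a j‖ ^ 2) = fun j => (1 - ‖a‖ ^ 2) * (‖a‖ ^ 2) ^ j from funext this]
  have hne : (1:ℝ) - ‖a‖ ^ 2 ≠ 0 := by nlinarith [norm_nonneg a]
  rw [tsum_mul_left, tsum_geometric_of_lt_one (by positivity) h2, mul_inv_cancel₀ hne]

lemma tsum_sq_tmC {a : ℕ → ℂ} {k : ℕ} (ha : ∀ i ≤ k, ‖a i‖ < 1) :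
    ∑' j, ‖tmC a k j‖ ^ 2 = 1 := by
  have hTM := expOn_TM ha
  have hsz := expOn_szego (ha k le_rfl)
  have h1 := parseval hTM
  have h2 := parseval hsz
  have hpt : ∀ t : ℝ, ‖TM a k (bp t)‖ ^ 2 = ‖szego (a k) (bp t)‖ ^ 2 := by
    intro t
    rw [norm_TM_eq a k (fun i hi => ha i hi.le) (norm_bp t)]
  have hpi : (0:ℝ) < 2 * π := by positivity
  have hEq : (2*π) * ∑' j, ‖tmC a k j‖^2 = (2*π) * 1 := by
    rw [← h1, integral_congr_ae (Filter.Eventually.of_forall hpt), h2,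
      tsum_sq_sC (ha k le_rfl), mul_one]
  exact mul_left_cancel₀ (ne_of_gt hpi) hEq

lemma tsum_sq_prodC {a : ℕ → ℂ} {k : ℕ} (ha : ∀ i < k, ‖a i‖ < 1) :
    ∑' j, ‖prodC a k j‖ ^ 2 = 1 := by
  have hP := expOn_blProd ha
  have h1 := parseval hP
  have hpt : ∀ t : ℝ, ‖∏ l ∈ Finset.range k, bl (a l) (bp t)‖ ^ 2 = 1 := by
    intro t
    rw [norm_prod, Finset.prod_congr rfl
      (fun i hi => norm_bl_eq_one (ha i (Finset.mem_range.1 hi)) (norm_bp t))]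
    simp
  rw [integral_congr_ae (Filter.Eventually.of_forall hpt)] at h1
  rw [integral_const] at h1
  rw [measureReal_def, μ1_univ] at h1
  rw [ENNReal.toReal_ofReal (by positivity), smul_eq_mul, mul_one] at h1
  have hpi : (0:ℝ) < 2 * π := by positivity
  have h2 : (2*π) * 1 = (2*π) * ∑' j, ‖prodC a k j‖^2 := by rw [mul_one]; exact h1
  exact (mul_left_cancel₀ (ne_of_gt hpi) h2).symm

lemma norm_coeff_le_one {c : ℕ → ℂ} (h : ∑' j, ‖c j‖ ^ 2 = 1)
    (hs : Summable (fun j => ‖c j‖ ^ 2)) (j : ℕ) : ‖c j‖ ≤ 1 := by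
  have h1 : ‖c j‖ ^ 2 ≤ 1 := by
    rw [← h]
    exact Summable.le_tsum hs j (fun _ _ => sq_nonneg _)
  nlinarith [norm_nonneg (c j)]

lemma summable_sq_of_expOn {g : ℝ → ℂ} {c : ℕ → ℂ} (h : ExpOn g c) :
    Summable (fun j => ‖c j‖ ^ 2) := by
  refine Summable.of_nonneg_of_le (fun j => sq_nonneg _) ?_ (h.1.mul_left (∑' j, ‖c j‖))
  intro j
  rw [sq]
  exact mul_le_mul_of_nonneg_right (Summable.le_tsum h.1 j (fun _ _ => norm_nonneg _)) (norm_nonneg _)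

lemma norm_tmC_le_one {a : ℕ → ℂ} {k : ℕ} (ha : ∀ i ≤ k, ‖a i‖ < 1) (j : ℕ) :
    ‖tmC a k j‖ ≤ 1 :=
  norm_coeff_le_one (tsum_sq_tmC ha) (summable_sq_of_expOn (expOn_TM ha)) j

lemma norm_tmC_le_small {a : ℕ → ℂ} {k : ℕ} (ha : ∀ i ≤ k, ‖a i‖ < 1) (j : ℕ) :
    ‖tmC a k j‖ ≤ (j + 1) * Real.sqrt (1 - ‖a k‖ ^ 2) := by
  have hP : ∀ i, ‖prodC a k i‖ ≤ 1 :=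
    norm_coeff_le_one (tsum_sq_prodC (fun i hi => ha i hi.le))
      (summable_sq_of_expOn (expOn_blProd (fun i hi => ha i hi.le)))
  have hs : ∀ i, ‖sC (a k) i‖ ≤ Real.sqrt (1 - ‖a k‖ ^ 2) := by
    intro i
    rw [norm_sC]
    calc Real.sqrt (1 - ‖a k‖ ^ 2) * ‖a k‖ ^ i ≤ Real.sqrt (1 - ‖a k‖ ^ 2) * 1 :=
          mul_le_mul_of_nonneg_left (pow_le_one₀ (norm_nonneg _) (ha k le_rfl).le)
            (Real.sqrt_nonneg _)
      _ = _ := mul_one _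
  calc ‖tmC a k j‖ ≤ ∑ p ∈ Finset.HasAntidiagonal.antidiagonal j, ‖sC (a k) p.1‖ * ‖prodC a k p.2‖ := by
        rw [tmC, convC]
        exact norm_sum_le_of_le _ (fun p _ => le_of_eq (norm_mul _ _))
    _ ≤ ∑ p ∈ Finset.HasAntidiagonal.antidiagonal j, Real.sqrt (1 - ‖a k‖ ^ 2) := by
        refine Finset.sum_le_sum ?_
        intro p _
        calc ‖sC (a k) p.1‖ * ‖prodC a k p.2‖ ≤ Real.sqrt (1 - ‖a k‖ ^ 2) * 1 :=
              mul_le_mul (hs p.1) (hP p.2) (norm_nonneg _) (Real.sqrt_nonneg _)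
          _ = _ := mul_one _
    _ = (j + 1) * Real.sqrt (1 - ‖a k‖ ^ 2) := by
        rw [Finset.sum_const, Finset.Nat.card_antidiagonal]
        push_cast
        ring

-- ### 2D integral representation

lemma norm_exp_neg_I_mul (r : ℝ) : ‖Complex.exp (-(Complex.I * r))‖ = 1 := by
  rw [show (-(Complex.I * r)) = ((-r : ℝ) : ℂ) * Complex.I by push_cast; ring]
  exact Complex.norm_exp_ofReal_mul_I _

lemma innerT2_eq_prod (f g : ℝ × ℝ → ℂ)
    (hint : Integrable (fun x => f x * (starRingEnd ℂ) (g x)) torusMeasure) :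
    innerT2 f g = (1 / (4 * (π : ℂ) ^ 2)) *
      ∫ x, f x * (starRingEnd ℂ) (g x) ∂torusMeasure := by
  rw [innerT2]
  congr 1
  rw [intervalIntegral.integral_of_le neg_pi_le_pi]
  have hin : ∀ t : ℝ, (∫ s in (-π)..π, f (t, s) * (starRingEnd ℂ) (g (t, s)))
      = ∫ s, f (t, s) * (starRingEnd ℂ) (g (t, s)) ∂μ1 := by
    intro t
    rw [intervalIntegral.integral_of_le neg_pi_le_pi]
    rfl
  show (∫ t, (∫ s in (-π)..π, f (t, s) * (starRingEnd ℂ) (g (t, s))) ∂μ1) = _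
  rw [show (∫ t, (∫ s in (-π)..π, f (t, s) * (starRingEnd ℂ) (g (t, s))) ∂μ1)
      = ∫ t, ∫ s, f (t, s) * (starRingEnd ℂ) (g (t, s)) ∂μ1 ∂μ1 from
    integral_congr_ae (Filter.Eventually.of_forall hin)]
  rw [show torusMeasure = μ1.prod μ1 from rfl] at hint ⊢
  rw [← MeasureTheory.integral_prod _ hint]

lemma integrable_f_mul_bdd {f : ℝ × ℝ → ℂ} (hf : MemLp f 2 torusMeasure)
    (g : ℝ × ℝ → ℂ) (hg : AEStronglyMeasurable g torusMeasure) (C : ℝ)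
    (hC : ∀ x, ‖g x‖ ≤ C) : Integrable (fun x => f x * g x) torusMeasure := by
  have hfi : Integrable f torusMeasure := hf.integrable one_le_two
  have h2 := Integrable.bdd_mul hfi hg (c := C) (Filter.Eventually.of_forall hC)
  exact h2.congr (Filter.Eventually.of_forall (fun x => mul_comm _ _))

lemma fc_eq {f : ℝ × ℝ → ℂ} (hf : MemLp f 2 torusMeasure) (j m : ℕ) :
    fourierCoeff2 f j m = (1 / (4 * (π : ℂ) ^ 2)) *
      ∫ x, f x * Complex.exp (-(Complex.I * ((j : ℂ) * x.1 + (m : ℂ) * x.2))) ∂torusMeasure := by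
  have hconj : ∀ x : ℝ × ℝ,
      (starRingEnd ℂ) (Complex.exp (Complex.I * (((j : ℤ) : ℂ) * x.1 + ((m : ℤ) : ℂ) * x.2)))
      = Complex.exp (-(Complex.I * ((j : ℂ) * x.1 + (m : ℂ) * x.2))) := by
    intro x
    rw [← Complex.exp_conj]
    congr 1
    simp only [map_mul, map_add, Complex.conj_I, Complex.conj_ofReal, map_intCast]
    push_cast
    ring
  have hbd1 : ∀ x : ℝ × ℝ, ‖(starRingEnd ℂ)
      (Complex.exp (Complex.I * (((j : ℤ) : ℂ) * x.1 + ((m : ℤ) : ℂ) * x.2)))‖ ≤ 1 := by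
    intro x
    rw [RCLike.norm_conj]
    rw [show (Complex.I * (((j : ℤ) : ℂ) * x.1 + ((m : ℤ) : ℂ) * x.2))
        = (((j : ℝ) * x.1 + (m : ℝ) * x.2 : ℝ) : ℂ) * Complex.I by push_cast; ring]
    exact le_of_eq (Complex.norm_exp_ofReal_mul_I _)
  have hint : Integrable (fun x => f x * (starRingEnd ℂ)
      (Complex.exp (Complex.I * (((j : ℤ) : ℂ) * x.1 + ((m : ℤ) : ℂ) * x.2)))) torusMeasure := by
    refine integrable_f_mul_bdd hf _ (Continuous.aestronglyMeasurable ?_) 1 hbd1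
    exact Complex.continuous_conj.comp (by fun_prop)
  rw [fourierCoeff2, innerT2_eq_prod _ _ hint]
  congr 1
  refine integral_congr_ae (Filter.Eventually.of_forall (fun x => ?_))
  dsimp only
  rw [hconj]

/-- The representation of the inner product against a TM product as a coefficient series. -/
lemma rep {f : ℝ × ℝ → ℂ} (hf : MemLp f 2 torusMeasure) {a b : ℕ → ℂ} {k l : ℕ}
    (ha : ∀ i ≤ k, ‖a i‖ < 1) (hb : ∀ i ≤ l, ‖b i‖ < 1) :
    innerT2 f (TMprod a b k l) = ∑' p : ℕ × ℕ,
      (starRingEnd ℂ) (tmC a k p.1 * tmC b l p.2) * fourierCoeff2 f p.1 p.2 := by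
  have hTa := expOn_TM ha
  have hTb := expOn_TM hb
  set Ca := tmC a k with hCa
  set Cb := tmC b l with hCb
  have hMa : ∀ t, ‖TM a k (bp t)‖ ≤ ∑' j, ‖Ca j‖ := fun t => hTa.norm_le t
  have hMb : ∀ t, ‖TM b l (bp t)‖ ≤ ∑' j, ‖Cb j‖ := fun t => hTb.norm_le t
  have ha2 : ∀ t, TM a k (bp t) = ∑' j, Ca j * bp t ^ j := hTa.2
  have hb2 : ∀ t, TM b l (bp t) = ∑' j, Cb j * bp t ^ j := hTb.2
  have hcont : Continuous (TMprod a b k l) :=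
    ((hTa.continuous.comp continuous_fst).mul (hTb.continuous.comp continuous_snd))
  have hbd : ∀ x, ‖TMprod a b k l x‖ ≤ (∑' j, ‖Ca j‖) * (∑' j, ‖Cb j‖) := by
    intro x
    show ‖TM a k (bp x.1) * TM b l (bp x.2)‖ ≤ _
    rw [norm_mul]
    exact mul_le_mul (hMa x.1) (hMb x.2) (norm_nonneg _)
      ((norm_nonneg _).trans (hMa x.1))
  have hint : Integrable (fun x => f x * (starRingEnd ℂ) (TMprod a b k l x)) torusMeasure := by
    refine integrable_f_mul_bdd hf _ (Continuous.aestronglyMeasurable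
      (Complex.continuous_conj.comp hcont)) ((∑' j, ‖Ca j‖) * (∑' j, ‖Cb j‖)) (fun x => ?_)
    rw [RCLike.norm_conj]
    exact hbd x
  rw [innerT2_eq_prod f _ hint]
  -- pointwise expansion
  set G : ℕ × ℕ → ℝ × ℝ → ℂ := fun p x => (starRingEnd ℂ) (Ca p.1 * Cb p.2) *
    (f x * Complex.exp (-(Complex.I * ((p.1 : ℂ) * x.1 + (p.2 : ℂ) * x.2)))) with hG
  have hpoint : ∀ x, f x * (starRingEnd ℂ) (TMprod a b k l x) = ∑' p : ℕ × ℕ, G p x := by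
    intro x
    have hs1 : Summable fun j => ‖Ca j * bp x.1 ^ j‖ := by
      simp only [norm_mul, norm_pow, norm_bp, one_pow, mul_one]; exact hTa.1
    have hs2 : Summable fun j => ‖Cb j * bp x.2 ^ j‖ := by
      simp only [norm_mul, norm_pow, norm_bp, one_pow, mul_one]; exact hTb.1
    have hTMx : TMprod a b k l x = ∑' p : ℕ × ℕ,
        (Ca p.1 * bp x.1 ^ p.1) * (Cb p.2 * bp x.2 ^ p.2) := by
      show TM a k (bp x.1) * TM b l (bp x.2) = _
      rw [ha2 x.1, hb2 x.2]
      exact tsum_mul_tsum_of_summable_norm hs1 hs2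
    have hstar : (starRingEnd ℂ) (∑' p : ℕ × ℕ, (Ca p.1 * bp x.1 ^ p.1) * (Cb p.2 * bp x.2 ^ p.2))
        = ∑' p : ℕ × ℕ, (starRingEnd ℂ) ((Ca p.1 * bp x.1 ^ p.1) * (Cb p.2 * bp x.2 ^ p.2)) :=
      tsum_star
    rw [hTMx, hstar, ← tsum_mul_left]
    congr 1
    ext p
    rw [hG]
    have he : (starRingEnd ℂ) ((Ca p.1 * bp x.1 ^ p.1) * (Cb p.2 * bp x.2 ^ p.2))
        = (starRingEnd ℂ) (Ca p.1 * Cb p.2) *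
          Complex.exp (-(Complex.I * ((p.1 : ℂ) * x.1 + (p.2 : ℂ) * x.2))) := by
      have hee : Complex.exp (-(Complex.I * (p.1 : ℂ) * (x.1 : ℝ))) *
          Complex.exp (-(Complex.I * (p.2 : ℂ) * (x.2 : ℝ)))
          = Complex.exp (-(Complex.I * ((p.1 : ℂ) * x.1 + (p.2 : ℂ) * x.2))) := by
        rw [← Complex.exp_add]
        congr 1
        ring
      simp only [map_mul]
      rw [conj_bp_pow, conj_bp_pow, ← hee]
      ring
    rw [he]
    ring
  rw [integral_congr_ae (Filter.Eventually.of_forall hpoint)]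
  -- swap
  have hfm : AEStronglyMeasurable f torusMeasure := hf.aestronglyMeasurable
  have hGm : ∀ p : ℕ × ℕ, AEStronglyMeasurable (G p) torusMeasure := by
    intro p
    apply AEStronglyMeasurable.const_mul
    apply hfm.mul
    exact Continuous.aestronglyMeasurable (Complex.continuous_exp.comp (by fun_prop))
  have hbsum : Summable (fun p : ℕ × ℕ => ‖Ca p.1‖ * ‖Cb p.2‖) :=
    hTa.1.mul_of_nonneg hTb.1 (by intro j; exact norm_nonneg _) (by intro j; exact norm_nonneg _)
  have hGb : ∀ (p : ℕ × ℕ) (x : ℝ × ℝ), ‖G p x‖ ≤ (‖Ca p.1‖ * ‖Cb p.2‖) * ‖f x‖ := by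
    intro p x
    refine le_of_eq ?_
    show ‖(starRingEnd ℂ) (Ca p.1 * Cb p.2) * (f x * _)‖ = _
    rw [norm_mul, RCLike.norm_conj, norm_mul, norm_mul,
      show (-(Complex.I * ((p.1 : ℂ) * x.1 + (p.2 : ℂ) * x.2)))
        = -(Complex.I * (((p.1 : ℝ) * x.1 + (p.2 : ℝ) * x.2 : ℝ) : ℂ)) by push_cast; ring,
      norm_exp_neg_I_mul, mul_one]
  have hswap := my_integral_tsum G hGm _ hbsum
    (fun p => mul_nonneg (norm_nonneg _) (norm_nonneg _))
    (fun x => ‖f x‖) (hf.integrable one_le_two).norm (fun x => norm_nonneg _) hGb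
  rw [hswap, ← tsum_mul_left]
  congr 1
  ext p
  rw [hG]
  show (1 / (4 * (π : ℂ) ^ 2)) * ∫ x, (starRingEnd ℂ) (Ca p.1 * Cb p.2) *
    (f x * Complex.exp (-(Complex.I * ((p.1 : ℂ) * x.1 + (p.2 : ℂ) * x.2)))) ∂torusMeasure = _
  rw [integral_const_mul, fc_eq hf p.1 p.2]
  push_cast
  ring

-- ### Bessel

def E2 (p : ℕ × ℕ) : ℝ × ℝ → ℂ :=
  fun x => Complex.exp (Complex.I * (((p.1 : ℤ) : ℂ) * x.1 + ((p.2 : ℤ) : ℂ) * x.2))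

lemma norm_E2 (p : ℕ × ℕ) (x : ℝ × ℝ) : ‖E2 p x‖ = 1 := by
  rw [E2, show (Complex.I * (((p.1 : ℤ) : ℂ) * x.1 + ((p.2 : ℤ) : ℂ) * x.2))
      = (((p.1 : ℝ) * x.1 + (p.2 : ℝ) * x.2 : ℝ) : ℂ) * Complex.I by push_cast; ring]
  exact Complex.norm_exp_ofReal_mul_I _

lemma continuous_E2 (p : ℕ × ℕ) : Continuous (E2 p) := by
  unfold E2; fun_prop

lemma memL2_E2 (p : ℕ × ℕ) : MemLp (E2 p) 2 torusMeasure := by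
  refine MemLp.mono_exponent (q := ⊤) ?_ le_top
  exact memLp_top_of_bound (continuous_E2 p).aestronglyMeasurable 1
    (Filter.Eventually.of_forall (fun x => le_of_eq (norm_E2 p x)))

lemma int_E2 (p q : ℕ × ℕ) :
    ∫ x, (starRingEnd ℂ) (E2 p x) * E2 q x ∂torusMeasure
      = (if p.1 = q.1 then (2 * π : ℂ) else 0) * (if p.2 = q.2 then (2 * π : ℂ) else 0) := by
  have hpt : ∀ x : ℝ × ℝ, (starRingEnd ℂ) (E2 p x) * E2 q x
      = Complex.exp (Complex.I * ((((q.1 : ℤ) - (p.1 : ℤ) : ℤ)) : ℂ) * x.1) *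
        Complex.exp (Complex.I * ((((q.2 : ℤ) - (p.2 : ℤ) : ℤ)) : ℂ) * x.2) := by
    intro x
    rw [E2, E2, ← Complex.exp_conj]
    simp only [map_mul, map_add, Complex.conj_I, Complex.conj_ofReal, map_intCast]
    rw [← Complex.exp_add, ← Complex.exp_add]
    congr 1
    push_cast
    ring
  rw [integral_congr_ae (Filter.Eventually.of_forall hpt), torus_eq]
  have hprod := MeasureTheory.integral_prod_mul (μ := μ1) (ν := μ1) (L := ℂ)
    (f := fun t : ℝ => Complex.exp (Complex.I * ((((q.1 : ℤ) - (p.1 : ℤ) : ℤ)) : ℂ) * t))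
    (g := fun s : ℝ => Complex.exp (Complex.I * ((((q.2 : ℤ) - (p.2 : ℤ) : ℤ)) : ℂ) * s))
  rw [hprod, integral_exp_int, integral_exp_int]
  congr 1
  · rcases eq_or_ne p.1 q.1 with h | h
    · rw [if_pos (by omega : (q.1 : ℤ) - (p.1 : ℤ) = 0), if_pos h]
    · rw [if_neg (by omega : ¬((q.1 : ℤ) - (p.1 : ℤ) = 0)), if_neg h]
  · rcases eq_or_ne p.2 q.2 with h | h
    · rw [if_pos (by omega : (q.2 : ℤ) - (p.2 : ℤ) = 0), if_pos h]
    · rw [if_neg (by omega : ¬((q.2 : ℤ) - (p.2 : ℤ) = 0)), if_neg h]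

lemma summable_fc_sq {f : ℝ × ℝ → ℂ} (hf : MemLp f 2 torusMeasure) :
    Summable (fun p : ℕ × ℕ => ‖fourierCoeff2 f p.1 p.2‖ ^ 2) := by
  classical
  set cst : ℂ := (((2 * π : ℝ)) : ℂ)⁻¹ with hcst
  have hpi : (π : ℝ) ≠ 0 := ne_of_gt pi_pos
  have hcstconj : (starRingEnd ℂ) cst = cst := by
    rw [hcst, map_inv₀, Complex.conj_ofReal]
  set v : ℕ × ℕ → (Lp ℂ 2 torusMeasure) := fun p => (memL2_E2 p).toLp (E2 p) with hv
  set u : ℕ × ℕ → (Lp ℂ 2 torusMeasure) := fun p => cst • v p with hu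
  have hinner_v : ∀ p q, (inner ℂ (v p) (v q) : ℂ)
      = (if p.1 = q.1 then (2 * π : ℂ) else 0) * (if p.2 = q.2 then (2 * π : ℂ) else 0) := by
    intro p q
    rw [MeasureTheory.L2.inner_def]
    rw [← int_E2 p q]
    apply integral_congr_ae
    filter_upwards [(memL2_E2 p).coeFn_toLp, (memL2_E2 q).coeFn_toLp] with x h1 h2
    rw [RCLike.inner_apply]
    rw [show (v p : ℝ × ℝ → ℂ) x = E2 p x from h1, show (v q : ℝ × ℝ → ℂ) x = E2 q x from h2]
    exact mul_comm _ _
  have hON : Orthonormal ℂ u := by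
    rw [orthonormal_iff_ite]
    intro p q
    rw [hu]
    simp only
    rw [inner_smul_left, inner_smul_right, hcstconj, hinner_v]
    rcases eq_or_ne p q with h | h
    · rw [if_pos h, h, if_pos rfl, if_pos rfl, hcst]
      have hπc : (π : ℂ) ≠ 0 := by exact_mod_cast hpi
      push_cast
      field_simp
    · rw [if_neg h]
      have : p.1 ≠ q.1 ∨ p.2 ≠ q.2 := by
        by_contra hc
        push_neg at hc
        exact h (Prod.ext hc.1 hc.2)
      rcases this with h1 | h1
      · rw [if_neg h1, zero_mul, mul_zero, mul_zero]
      · rw [if_neg h1, mul_zero, mul_zero, mul_zero]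
  set x : Lp ℂ 2 torusMeasure := hf.toLp f with hx
  have hinner_ux : ∀ p : ℕ × ℕ, (inner ℂ (u p) x : ℂ)
      = cst * ((4 * (π : ℂ) ^ 2) * fourierCoeff2 f p.1 p.2) := by
    intro p
    rw [hu]
    simp only
    rw [inner_smul_left, hcstconj]
    congr 1
    rw [MeasureTheory.L2.inner_def]
    have hconjE : ∀ y : ℝ × ℝ, (starRingEnd ℂ) (E2 p y)
        = Complex.exp (-(Complex.I * ((p.1 : ℂ) * y.1 + (p.2 : ℂ) * y.2))) := by
      intro y
      rw [E2, ← Complex.exp_conj]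
      congr 1
      simp only [map_mul, map_add, Complex.conj_I, Complex.conj_ofReal, map_intCast]
      push_cast
      ring
    have : (∫ y, (inner ℂ ((v p : ℝ × ℝ → ℂ) y) ((x : ℝ × ℝ → ℂ) y) : ℂ) ∂torusMeasure)
        = ∫ y, f y * Complex.exp (-(Complex.I * ((p.1 : ℂ) * y.1 + (p.2 : ℂ) * y.2)))
            ∂torusMeasure := by
      apply integral_congr_ae
      filter_upwards [(memL2_E2 p).coeFn_toLp, hf.coeFn_toLp] with y h1 h2
      rw [RCLike.inner_apply]
      rw [show (v p : ℝ × ℝ → ℂ) y = E2 p y from h1, show (x : ℝ × ℝ → ℂ) y = f y from h2,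
        hconjE y]
    rw [this, fc_eq hf p.1 p.2]
    have hπc : (π : ℂ) ≠ 0 := by exact_mod_cast hpi
    have hne : (4 * (π : ℂ) ^ 2) ≠ 0 := mul_ne_zero (by norm_num) (pow_ne_zero 2 hπc)
    field_simp
  have hsum := hON.inner_products_summable (x := x)
  have heq : ∀ p : ℕ × ℕ, ‖(inner ℂ (u p) x : ℂ)‖ ^ 2 = (2 * π) ^ 2 * ‖fourierCoeff2 f p.1 p.2‖ ^ 2 := by
    intro p
    rw [hinner_ux p, norm_mul, norm_mul]
    have h1 : ‖cst‖ = (2 * π)⁻¹ := by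
      rw [hcst, norm_inv, Complex.norm_real, Real.norm_eq_abs,
        _root_.abs_of_nonneg (by positivity)]
    have h2 : ‖(4 * (π : ℂ) ^ 2)‖ = 4 * π ^ 2 := by
      rw [show (4 * (π : ℂ) ^ 2) = ((4 * π ^ 2 : ℝ) : ℂ) by push_cast; ring,
        Complex.norm_real, Real.norm_eq_abs, _root_.abs_of_nonneg (by positivity)]
    rw [h1, h2]
    have hs : ((2 * π : ℝ))⁻¹ * (4 * π ^ 2) = 2 * π := by
      field_simp
      ring
    calc ((2 * π)⁻¹ * (4 * π ^ 2 * ‖fourierCoeff2 f p.1 p.2‖)) ^ 2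
        = ((2 * π)⁻¹ * (4 * π ^ 2)) ^ 2 * ‖fourierCoeff2 f p.1 p.2‖ ^ 2 := by ring
      _ = (2 * π) ^ 2 * ‖fourierCoeff2 f p.1 p.2‖ ^ 2 := by rw [hs]
  rw [show (fun p : ℕ × ℕ => ‖(inner ℂ (u p) x : ℂ)‖ ^ 2)
      = fun p : ℕ × ℕ => (2 * π) ^ 2 * ‖fourierCoeff2 f p.1 p.2‖ ^ 2 from funext heq] at hsum
  have := hsum.mul_left ((2 * π) ^ 2)⁻¹
  refine this.congr ?_
  intro p
  rw [← mul_assoc, inv_mul_cancel₀ (by positivity), one_mul]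

lemma fc_bound {f : ℝ × ℝ → ℂ} (hf : MemLp f 2 torusMeasure) (p : ℕ × ℕ) :
    ‖fourierCoeff2 f p.1 p.2‖ ≤ (1 / (4 * π ^ 2)) * ∫ y, ‖f y‖ ∂torusMeasure := by
  rw [fc_eq hf p.1 p.2, norm_mul]
  have h1 : ‖(1 / (4 * (π : ℂ) ^ 2))‖ = 1 / (4 * π ^ 2) := by
    rw [show (1 / (4 * (π : ℂ) ^ 2)) = ((1 / (4 * π ^ 2) : ℝ) : ℂ) by push_cast; ring,
      Complex.norm_real, Real.norm_eq_abs, _root_.abs_of_nonneg (by positivity)]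
  rw [h1]
  gcongr
  refine (norm_integral_le_integral_norm _).trans ?_
  refine integral_mono_of_nonneg (Filter.Eventually.of_forall (fun y => norm_nonneg _))
    (hf.integrable one_le_two).norm (Filter.Eventually.of_forall (fun y => ?_))
  dsimp only
  rw [norm_mul, show (-(Complex.I * ((p.1 : ℂ) * y.1 + (p.2 : ℂ) * y.2)))
    = -(Complex.I * (((p.1 : ℝ) * y.1 + (p.2 : ℝ) * y.2 : ℝ) : ℂ)) by push_cast; ring,
    norm_exp_neg_I_mul, mul_one]

-- ### tsum helpers

lemma tsum_CS {ι : Type*} (x y : ι → ℝ) (hx0 : ∀ i, 0 ≤ x i) (hy0 : ∀ i, 0 ≤ y i)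
    (hx : Summable (fun i => x i ^ 2)) (hy : Summable (fun i => y i ^ 2)) :
    ∑' i, x i * y i ≤ Real.sqrt (∑' i, x i ^ 2) * Real.sqrt (∑' i, y i ^ 2) := by
  have hxy : Summable (fun i => x i * y i) := by
    refine Summable.of_nonneg_of_le (fun i => mul_nonneg (hx0 i) (hy0 i)) (fun i => ?_)
      ((hx.add hy).mul_left (1/2))
    nlinarith [sq_nonneg (x i - y i)]
  refine Summable.tsum_le_of_sum_le hxy (fun s => ?_)
  refine (Real.sum_mul_le_sqrt_mul_sqrt s x y).trans ?_
  exact mul_le_mul (Real.sqrt_le_sqrt (Summable.sum_le_tsum s (fun i _ => sq_nonneg _) hx))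
    (Real.sqrt_le_sqrt (Summable.sum_le_tsum s (fun i _ => sq_nonneg _) hy))
    (Real.sqrt_nonneg _) (Real.sqrt_nonneg _)

lemma tsum_split {ι : Type*} [DecidableEq ι] (c : ι → ℝ) (hc0 : ∀ i, 0 ≤ c i) (hc : Summable c) (S : Finset ι) :
    Summable (fun i => if i ∈ S then 0 else c i) ∧
    ∑' i, c i = (∑ i ∈ S, c i) + ∑' i, (if i ∈ S then 0 else c i) := by
  have hw : Summable (fun i => if i ∈ S then 0 else c i) := by
    refine Summable.of_nonneg_of_le (fun i => ?_) (fun i => ?_) hc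
    · by_cases h : i ∈ S <;> simp [h, hc0 i]
    · by_cases h : i ∈ S <;> simp [h, hc0 i]
  have hv : Summable (fun i => if i ∈ S then c i else 0) :=
    summable_of_ne_finset_zero (s := S) (fun b hb => if_neg hb)
  refine ⟨hw, ?_⟩
  have hadd : ∀ i, c i = (if i ∈ S then c i else 0) + (if i ∈ S then 0 else c i) := by
    intro i
    by_cases h : i ∈ S <;> simp [h]
  rw [tsum_congr hadd, Summable.tsum_add hv hw]
  congr 1
  rw [tsum_eq_sum (s := S) (fun b hb => if_neg hb)]
  exact Finset.sum_congr rfl (fun i hi => if_pos hi)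

lemma tail_small {c : ℕ × ℕ → ℝ} (hc0 : ∀ p, 0 ≤ c p) (hc : Summable c) {ε : ℝ} (hε : 0 < ε) :
    ∃ N : ℕ, ∑' p : ℕ × ℕ,
      (if p ∈ Finset.range N ×ˢ Finset.range N then 0 else c p) < ε := by
  classical
  obtain ⟨S, hS⟩ : ∃ S : Finset (ℕ × ℕ), (∑' p, c p) - ε < ∑ p ∈ S, c p := by
    have h := hc.hasSum
    exact ((tendsto_order.1 h).1 _ (show (∑' p, c p) - ε < ∑' p, c p by linarith)).exists
  set N := 1 + S.sup (fun p => max p.1 p.2) with hN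
  have hsub : S ⊆ Finset.range N ×ˢ Finset.range N := by
    intro p hp
    have h1 : max p.1 p.2 ≤ S.sup (fun p => max p.1 p.2) :=
      Finset.le_sup (f := fun p : ℕ × ℕ => max p.1 p.2) hp
    rw [Finset.mem_product, Finset.mem_range, Finset.mem_range]
    omega
  refine ⟨N, ?_⟩
  set B := Finset.range N ×ˢ Finset.range N with hB
  obtain ⟨hwS, hsplitS⟩ := tsum_split c hc0 hc S
  obtain ⟨hwB, _⟩ := tsum_split c hc0 hc B
  have hle : ∑' p, (if p ∈ B then 0 else c p) ≤ ∑' p, (if p ∈ S then 0 else c p) := by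
    refine Summable.tsum_le_tsum (fun p => ?_) hwB hwS
    by_cases h : p ∈ B
    · rw [if_pos h]
      by_cases h2 : p ∈ S <;> simp [h2, hc0 p]
    · rw [if_neg h, if_neg (fun hc2 => h (hsub hc2))]
  have h2 : ∑' p, (if p ∈ S then 0 else c p) < ε := by
    have := hsplitS
    linarith
  linarith

lemma sqrt_two_delta {r δ : ℝ} (hr1 : r < 1) (hr : 1 - δ < r) :
    Real.sqrt (1 - r ^ 2) ≤ Real.sqrt (2 * δ) := by
  apply Real.sqrt_le_sqrt
  nlinarith

/-- The key uniform estimate. -/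
lemma key {f : ℝ × ℝ → ℂ} (hf : MemLp f 2 torusMeasure) {ε : ℝ} (hε : 0 < ε) :
    ∃ δ : ℝ, 0 < δ ∧ δ < 1 ∧ ∀ (a b : ℕ → ℂ) (k l : ℕ),
      (∀ i ≤ k, ‖a i‖ < 1) → (∀ i ≤ l, ‖b i‖ < 1) →
      (1 - δ < ‖a k‖ ∨ 1 - δ < ‖b l‖) → ‖innerT2 f (TMprod a b k l)‖ < ε := by
  classical
  set cc : ℕ × ℕ → ℝ := fun p => ‖fourierCoeff2 f p.1 p.2‖ with hcc
  have hcc0 : ∀ p, 0 ≤ cc p := fun p => norm_nonneg _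
  have hccsq : Summable (fun p => cc p ^ 2) := summable_fc_sq hf
  obtain ⟨Mc, hMc0, hMc⟩ : ∃ M : ℝ, 0 ≤ M ∧ ∀ p, cc p ≤ M := by
    refine ⟨(1 / (4 * π ^ 2)) * ∫ y, ‖f y‖ ∂torusMeasure, ?_, fun p => fc_bound hf p⟩
    exact le_trans (norm_nonneg _) (fc_bound hf (0, 0))
  -- choose the box
  obtain ⟨N, hN⟩ := tail_small (fun p => sq_nonneg (cc p)) hccsq
    (show (0:ℝ) < (ε/2)^2 by positivity)
  set B := Finset.range N ×ˢ Finset.range N with hB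
  -- choose δ
  obtain ⟨D, hD0, hDgt⟩ : ∃ D : ℝ, 0 < D ∧ (N : ℝ) ^ 3 * Mc < D := by
    refine ⟨(N : ℝ) ^ 3 * Mc + 1, by positivity, by linarith⟩
  refine ⟨min (1/2) (ε ^ 2 / (8 * D ^ 2)), by positivity, lt_of_le_of_lt (min_le_left _ _)
    (by norm_num), ?_⟩
  set δ := min (1/2) (ε ^ 2 / (8 * D ^ 2)) with hδ
  have hδpos : 0 < δ := by positivity
  have hsqrtδ : Real.sqrt (2 * δ) ≤ ε / (2 * D) := by
    have h0 : δ ≤ ε ^ 2 / (8 * D ^ 2) := min_le_right _ _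
    have h1 : 2 * δ ≤ ε ^ 2 / (4 * D ^ 2) := by
      rw [show ε ^ 2 / (4 * D ^ 2) = 2 * (ε ^ 2 / (8 * D ^ 2)) by ring]
      linarith
    refine (Real.sqrt_le_sqrt h1).trans ?_
    rw [show ε ^ 2 / (4 * D ^ 2) = (ε / (2 * D)) ^ 2 by ring]
    rw [Real.sqrt_sq (by positivity)]
  clear_value δ
  intro a b k l ha hb hcase
  -- coefficients
  set Ta := tmC a k with hTa
  set Tb := tmC b l with hTb
  have hEa := expOn_TM ha
  have hEb := expOn_TM hb
  have hTa1 : ∀ j, ‖Ta j‖ ≤ 1 := norm_tmC_le_one ha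
  have hTb1 : ∀ j, ‖Tb j‖ ≤ 1 := norm_tmC_le_one hb
  have hTasq : ∑' j, ‖Ta j‖ ^ 2 = 1 := tsum_sq_tmC ha
  have hTbsq : ∑' j, ‖Tb j‖ ^ 2 = 1 := tsum_sq_tmC hb
  set u : ℕ × ℕ → ℝ := fun p => (‖Ta p.1‖ * ‖Tb p.2‖) * cc p with hu
  have hu0 : ∀ p, 0 ≤ u p :=
    fun p => mul_nonneg (mul_nonneg (norm_nonneg _) (norm_nonneg _)) (hcc0 p)
  have hbsum : Summable (fun p : ℕ × ℕ => ‖Ta p.1‖ * ‖Tb p.2‖) :=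
    hEa.1.mul_of_nonneg hEb.1 (by intro j; exact norm_nonneg _) (by intro j; exact norm_nonneg _)
  have husum : Summable u := by
    refine Summable.of_nonneg_of_le hu0 (fun p => ?_) (hbsum.mul_left Mc)
    calc (‖Ta p.1‖ * ‖Tb p.2‖) * cc p ≤ (‖Ta p.1‖ * ‖Tb p.2‖) * Mc :=
          mul_le_mul_of_nonneg_left (hMc p) (mul_nonneg (norm_nonneg _) (norm_nonneg _))
      _ = Mc * (‖Ta p.1‖ * ‖Tb p.2‖) := by ring
  -- the series bound
  have hrep := rep hf ha hb
  have hbound : ‖innerT2 f (TMprod a b k l)‖ ≤ ∑' p, u p := by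
    rw [hrep]
    refine (norm_tsum_le_tsum_norm ?_).trans ?_
    · refine husum.congr (fun p => ?_)
      rw [norm_mul, RCLike.norm_conj, norm_mul]
    · refine le_of_eq (tsum_congr (fun p => ?_))
      rw [norm_mul, RCLike.norm_conj, norm_mul]
  -- split
  obtain ⟨hwu, hsplitu⟩ := tsum_split u hu0 husum B
  -- in-box bound
  have hsmall : ∀ p ∈ B, ‖Ta p.1‖ * ‖Tb p.2‖ ≤ (N : ℝ) * Real.sqrt (2 * δ) := by
    intro p hp
    rw [hB, Finset.mem_product, Finset.mem_range, Finset.mem_range] at hp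
    rcases hcase with hca | hcb
    · calc ‖Ta p.1‖ * ‖Tb p.2‖ ≤ ‖Ta p.1‖ * 1 :=
            mul_le_mul_of_nonneg_left (hTb1 p.2) (norm_nonneg _)
        _ = ‖Ta p.1‖ := mul_one _
        _ ≤ (p.1 + 1) * Real.sqrt (1 - ‖a k‖ ^ 2) := norm_tmC_le_small ha p.1
        _ ≤ (N : ℝ) * Real.sqrt (2 * δ) := by
            refine mul_le_mul ?_ (sqrt_two_delta (ha k le_rfl) hca) (Real.sqrt_nonneg _)
              (by positivity)
            push_cast
            have : (p.1 : ℝ) + 1 ≤ N := by exact_mod_cast Nat.succ_le_of_lt hp.1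
            linarith
    · calc ‖Ta p.1‖ * ‖Tb p.2‖ ≤ 1 * ‖Tb p.2‖ :=
            mul_le_mul_of_nonneg_right (hTa1 p.1) (norm_nonneg _)
        _ = ‖Tb p.2‖ := one_mul _
        _ ≤ (p.2 + 1) * Real.sqrt (1 - ‖b l‖ ^ 2) := norm_tmC_le_small hb p.2
        _ ≤ (N : ℝ) * Real.sqrt (2 * δ) := by
            refine mul_le_mul ?_ (sqrt_two_delta (hb l le_rfl) hcb) (Real.sqrt_nonneg _)
              (by positivity)
            push_cast
            have : (p.2 : ℝ) + 1 ≤ N := by exact_mod_cast Nat.succ_le_of_lt hp.2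
            linarith
  have hboxsum : ∑ p ∈ B, u p ≤ (N : ℝ) ^ 2 * ((N : ℝ) * Real.sqrt (2 * δ) * Mc) := by
    calc ∑ p ∈ B, u p ≤ ∑ p ∈ B, (N : ℝ) * Real.sqrt (2 * δ) * Mc := by
          refine Finset.sum_le_sum (fun p hp => ?_)
          exact mul_le_mul (hsmall p hp) (hMc p) (hcc0 p) (by positivity)
      _ = (B.card : ℝ) * ((N : ℝ) * Real.sqrt (2 * δ) * Mc) := by
          rw [Finset.sum_const, nsmul_eq_mul]
      _ ≤ (N : ℝ) ^ 2 * ((N : ℝ) * Real.sqrt (2 * δ) * Mc) := by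
          refine mul_le_mul_of_nonneg_right ?_ (by positivity)
          rw [hB, Finset.card_product, Finset.card_range]
          push_cast
          nlinarith [Nat.cast_nonneg (α := ℝ) N]
  have hboxlt : ∑ p ∈ B, u p < ε / 2 := by
    refine lt_of_le_of_lt hboxsum ?_
    have h1 : (N : ℝ) ^ 2 * ((N : ℝ) * Real.sqrt (2 * δ) * Mc)
        = Real.sqrt (2 * δ) * ((N : ℝ) ^ 3 * Mc) := by ring
    rw [h1]
    have h2 : Real.sqrt (2 * δ) * ((N : ℝ) ^ 3 * Mc) ≤ (ε / (2 * D)) * ((N : ℝ) ^ 3 * Mc) :=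
      mul_le_mul_of_nonneg_right hsqrtδ (by positivity)
    refine lt_of_le_of_lt h2 ?_
    rw [div_mul_eq_mul_div, div_lt_iff₀ (by positivity)]
    nlinarith [hε, hD0, hDgt, mul_pos hε hD0]
  -- tail bound
  have htail : ∑' p, (if p ∈ B then 0 else u p) ≤ ε / 2 := by
    set y : ℕ × ℕ → ℝ := fun p => if p ∈ B then 0 else cc p with hy
    have hy0 : ∀ p, 0 ≤ y p := by
      intro p
      rw [hy]
      by_cases h : p ∈ B <;> simp [h, hcc0 p]
    have hwy : (fun p => if p ∈ B then 0 else u p)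
        = fun p => (‖Ta p.1‖ * ‖Tb p.2‖) * y p := by
      funext p
      by_cases h : p ∈ B <;> simp [hy, h, hu]
    have hysq : Summable (fun p => y p ^ 2) := by
      refine Summable.of_nonneg_of_le (fun p => sq_nonneg _) (fun p => ?_) hccsq
      rw [hy]
      by_cases h : p ∈ B <;> simp [h, sq_nonneg (cc p)]
    have hxsq : Summable (fun p : ℕ × ℕ => (‖Ta p.1‖ * ‖Tb p.2‖) ^ 2) := by
      refine Summable.of_nonneg_of_le (fun p => sq_nonneg _) (fun p => ?_) hbsum
      rw [mul_pow]
      calc ‖Ta p.1‖ ^ 2 * ‖Tb p.2‖ ^ 2 ≤ 1 * ‖Ta p.1‖ * (1 * ‖Tb p.2‖) := by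
            rw [sq, sq]
            refine mul_le_mul ?_ ?_ (mul_nonneg (norm_nonneg _) (norm_nonneg _)) ?_
            · exact mul_le_mul_of_nonneg_right (hTa1 p.1) (norm_nonneg _)
            · exact mul_le_mul_of_nonneg_right (hTb1 p.2) (norm_nonneg _)
            · positivity
        _ = ‖Ta p.1‖ * ‖Tb p.2‖ := by ring
    have hCS := tsum_CS (fun p : ℕ × ℕ => ‖Ta p.1‖ * ‖Tb p.2‖) y
      (fun p => mul_nonneg (norm_nonneg _) (norm_nonneg _)) hy0 hxsq hysq
    rw [hwy]
    refine hCS.trans ?_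
    have hx1 : ∑' p : ℕ × ℕ, (‖Ta p.1‖ * ‖Tb p.2‖) ^ 2 = 1 := by
      have h12 := tsum_mul_tsum_of_summable_norm
        (f := fun j => ‖Ta j‖ ^ 2) (g := fun j => ‖Tb j‖ ^ 2)
        (by simpa [abs_of_nonneg (sq_nonneg (_ : ℝ))] using summable_sq_of_expOn hEa)
        (by simpa [abs_of_nonneg (sq_nonneg (_ : ℝ))] using summable_sq_of_expOn hEb)
      calc ∑' p : ℕ × ℕ, (‖Ta p.1‖ * ‖Tb p.2‖) ^ 2
          = ∑' p : ℕ × ℕ, (fun j => ‖Ta j‖ ^ 2) p.1 * (fun j => ‖Tb j‖ ^ 2) p.2 :=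
            tsum_congr (fun p => by dsimp only; rw [mul_pow])
        _ = (∑' j, ‖Ta j‖ ^ 2) * (∑' j, ‖Tb j‖ ^ 2) := h12.symm
        _ = 1 := by rw [hTasq, hTbsq, one_mul]
    have hy1 : ∑' p, y p ^ 2 ≤ (ε / 2) ^ 2 := by
      refine le_of_le_of_eq (le_of_lt ?_) rfl
      have : ∀ p, y p ^ 2 = (if p ∈ B then 0 else cc p ^ 2) := by
        intro p
        rw [hy]
        by_cases h : p ∈ B <;> simp [h]
      rw [tsum_congr this]
      exact hN
    calc Real.sqrt (∑' p : ℕ × ℕ, (‖Ta p.1‖ * ‖Tb p.2‖) ^ 2) * Real.sqrt (∑' p, y p ^ 2)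
        ≤ Real.sqrt 1 * Real.sqrt ((ε / 2) ^ 2) :=
          mul_le_mul (Real.sqrt_le_sqrt (le_of_eq hx1)) (Real.sqrt_le_sqrt hy1)
            (Real.sqrt_nonneg _) (Real.sqrt_nonneg _)
      _ = ε / 2 := by
          rw [Real.sqrt_one, one_mul, Real.sqrt_sq (by positivity)]
  calc ‖innerT2 f (TMprod a b k l)‖ ≤ ∑' p, u p := hbound
    _ = (∑ p ∈ B, u p) + ∑' p, (if p ∈ B then 0 else u p) := hsplitu
    _ < ε / 2 + ε / 2 := by
        have := htail
        linarith [hboxlt]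
    _ = ε := by ring

/-- uniformly in all parameter choices, the `n`-th partial sum difference
energy is small once both `|a_n|` and `|b_n|` are close to `1`. -/
theorem DnSq_small_near_boundary (f : ℝ × ℝ → ℂ) (hf : MemH2T2 f)
    (n : ℕ) (hn : 1 ≤ n) (ε : ℝ) (hε : 0 < ε) :
    ∃ δ : ℝ, 0 < δ ∧ δ < 1 ∧
      ∀ a b : ℕ → ℂ, (∀ k < n, ‖a k‖ < 1) → (∀ k < n, ‖b k‖ < 1) →
        1 - δ < ‖a (n - 1)‖ → 1 - δ < ‖b (n - 1)‖ →
          DnSq f a b n < ε := by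
  have hf2 := hf.1
  have hpos : (0:ℝ) < ε / ((n:ℝ)^2 + 1) := by positivity
  obtain ⟨δ, hδ0, hδ1, hkey⟩ := key hf2
    (show 0 < Real.sqrt (ε / ((n:ℝ)^2 + 1)) by positivity)
  refine ⟨δ, hδ0, hδ1, ?_⟩
  intro a b ha hb han hbn
  rw [DnSq]
  set T := (Finset.range n ×ˢ Finset.range n).filter (fun p => max p.1 p.2 = n - 1) with hT
  have hterm : ∀ p ∈ T, ‖innerT2 f (TMprod a b p.1 p.2)‖ ^ 2 ≤ ε / ((n:ℝ)^2 + 1) := by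
    intro p hp
    rw [hT, Finset.mem_filter, Finset.mem_product, Finset.mem_range, Finset.mem_range] at hp
    obtain ⟨⟨hp1, hp2⟩, hpmax⟩ := hp
    have ha' : ∀ i ≤ p.1, ‖a i‖ < 1 := fun i hi => ha i (lt_of_le_of_lt hi hp1)
    have hb' : ∀ i ≤ p.2, ‖b i‖ < 1 := fun i hi => hb i (lt_of_le_of_lt hi hp2)
    have hcase : 1 - δ < ‖a p.1‖ ∨ 1 - δ < ‖b p.2‖ := by
      rcases max_choice p.1 p.2 with h | h
      · left
        rw [show p.1 = n - 1 from h.symm.trans hpmax]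
        exact han
      · right
        rw [show p.2 = n - 1 from h.symm.trans hpmax]
        exact hbn
    have hlt := hkey a b p.1 p.2 ha' hb' hcase
    have h2 : ‖innerT2 f (TMprod a b p.1 p.2)‖ ^ 2
        < (Real.sqrt (ε / ((n:ℝ)^2 + 1))) ^ 2 :=
      pow_lt_pow_left₀ hlt (norm_nonneg _) (by norm_num)
    rw [Real.sq_sqrt hpos.le] at h2
    exact h2.le
  calc ∑ p ∈ T, ‖innerT2 f (TMprod a b p.1 p.2)‖ ^ 2
      ≤ T.card • (ε / ((n:ℝ)^2 + 1)) := Finset.sum_le_card_nsmul T _ _ hterm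
    _ = (T.card : ℝ) * (ε / ((n:ℝ)^2 + 1)) := nsmul_eq_mul _ _
    _ ≤ ((n:ℝ)^2) * (ε / ((n:ℝ)^2 + 1)) := by
        refine mul_le_mul_of_nonneg_right ?_ hpos.le
        have hcard : T.card ≤ n * n := by
          refine le_trans (Finset.card_filter_le _ _) (le_of_eq ?_)
          rw [Finset.card_product, Finset.card_range]
        calc (T.card : ℝ) ≤ ((n * n : ℕ) : ℝ) := by exact_mod_cast hcard
          _ = (n:ℝ)^2 := by push_cast; ring
    _ < ε := by
        rw [show ((n:ℝ)^2) * (ε / ((n:ℝ)^2 + 1)) = ε * ((n:ℝ)^2 / ((n:ℝ)^2 + 1)) by ring]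
        have hlt1 : (n:ℝ)^2 / ((n:ℝ)^2 + 1) < 1 := by
          rw [div_lt_one (by positivity)]
          linarith
        calc ε * ((n:ℝ)^2 / ((n:ℝ)^2 + 1)) < ε * 1 := by
              exact mul_lt_mul_of_pos_left hlt1 hε
          _ = ε := mul_one ε

end
end

section
/- (Convergence of Weak Pre-Orthogonal Greedy Algorithm.) Let ℋ be a complex Hilbert space, 𝒜 ⊆ ℋ a set of unit vectors whose linear span is dense in ℋ, f ∈ ℋ, and ρ ∈ (0,1]. Let (a_n) be a sequence in 𝒜 such that, for every n: (i) Q_{n−1} a_n ≠ 0, where Q_{n−1} is the orthogonal projection onto the orthogonal complement of span{a₁,...,a_{n−1}} (Q₀ = Id), so that B_n := Q_{n−1} a_n / ‖Q_{n−1} a_n‖ is defined and {B₁,...,B_n} is the Gram–Schmidt orthonormalization of {a₁,...,a_n}; and (ii) with g_n := f − Σ_{k=1}^{n−1} ⟨f, B_k⟩ B_k, one has |⟨g_n, B_n⟩| ≥ ρ · sup { |⟨g_n, Q_{n−1} a / ‖Q_{n−1} a‖⟩| : a ∈ 𝒜, Q_{n−1} a ≠ 0 }. Then f = Σ_{k=1}^{∞}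 ⟨f, B_k⟩ B_k, with convergence in the norm of ℋ. -/
open Filter Finset

noncomputable section

/-- `Qproj a n f` is `Q_{n}f = f` minus the orthogonal projection of `f` onto
`span{a 0, …, a (n-1)}`, i.e. the orthogonal projection of `f` onto the orthogonal
complement of `span{a 0, …, a (n-1)}` (`Qproj a 0 = id`). -/
def Qproj {H : Type*} [NormedAddCommGroup H] [InnerProductSpace ℂ H]
    (a : ℕ → H) (n : ℕ) (f : H) : H :=
  letI : FiniteDimensional ℂ (Submodule.span ℂ (a '' Set.Iio n)) :=
    FiniteDimensional.span_of_finite ℂ ((Set.finite_Iio n).image a)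
  f - (Submodule.orthogonalProjectionOnto (Submodule.span ℂ (a '' Set.Iio n)) f : H)

section Aux

variable {H : Type*} [NormedAddCommGroup H] [InnerProductSpace ℂ H]

local notation "⟪" x ", " y "⟫" => @inner ℂ _ _ x y

/-- The span of finitely many vectors is finite dimensional (local instance). -/
instance WPOGA_fd (a : ℕ → H) (n : ℕ) :
    FiniteDimensional ℂ (Submodule.span ℂ (a '' Set.Iio n)) :=
  FiniteDimensional.span_of_finite ℂ ((Set.finite_Iio n).image a)

theorem Qproj_def (a : ℕ → H) (n : ℕ) (x : H) :
    Qproj a n x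
      = x - (Submodule.orthogonalProjectionOnto (Submodule.span ℂ (a '' Set.Iio n)) x : H) := rfl

theorem Qproj_mem_orthogonal (a : ℕ → H) (n : ℕ) (x : H) :
    Qproj a n x ∈ (Submodule.span ℂ (a '' Set.Iio n))ᗮ := by
  rw [Qproj_def]
  exact Submodule.sub_starProjection_mem_orthogonal x

theorem sub_Qproj_mem (a : ℕ → H) (n : ℕ) (x : H) :
    x - Qproj a n x ∈ Submodule.span ℂ (a '' Set.Iio n) := by
  rw [Qproj_def]
  simp

theorem norm_Qproj_le (a : ℕ → H) (n : ℕ) (x : H) : ‖Qproj a n x‖ ≤ ‖x‖ := by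
  set Q := Qproj a n x with hQdef
  have h0 : ⟪x - Q, Q⟫ = 0 :=
    (Submodule.mem_orthogonal _ _).1 (Qproj_mem_orthogonal a n x) _ (sub_Qproj_mem a n x)
  have h1 : ⟪Q, x - Q⟫ = 0 := by
    rw [← inner_conj_symm, h0, map_zero]
  have h2 : ⟪Q, x⟫ = ⟪Q, Q⟫ := by
    have := inner_sub_right (𝕜 := ℂ) Q x Q
    rw [h1] at this
    linear_combination (norm := module) -this
  have h3 : ‖Q‖ * ‖Q‖ ≤ ‖Q‖ * ‖x‖ := by
    calc ‖Q‖ * ‖Q‖ = ‖⟪Q, Q⟫‖ := by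
          rw [inner_self_eq_norm_sq_to_K (𝕜 := ℂ)]
          simp [sq, abs_of_nonneg (norm_nonneg Q)]
      _ = ‖⟪Q, x⟫‖ := by rw [h2]
      _ ≤ ‖Q‖ * ‖x‖ := norm_inner_le_norm _ _
  rcases eq_or_lt_of_le (norm_nonneg Q) with h | h
  · rw [← h]; exact norm_nonneg x
  · exact le_of_mul_le_mul_left h3 h

end Aux

/-- Convergence of the Weak Pre-Orthogonal Greedy Algorithm, 0-based
indexing: under the Pre-Orthogonal ρ-Maximal Selection Principle, `f = Σ_k ⟨f,B_k⟩B_k`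
in norm.  Here `B n` is the Gram–Schmidt orthonormalization of `a 0, …, a n`
(`B n = Q_n a_n / ‖Q_n a_n‖`), and `g n = f - Σ_{k<n} ⟨f,B_k⟩B_k` is the orthogonal
standard remainder. -/
theorem WPOGA_convergence {H : Type*} [NormedAddCommGroup H] [InnerProductSpace ℂ H]
    [CompleteSpace H]
    (A : Set H) (hA1 : ∀ x ∈ A, ‖x‖ = 1)
    (hA2 : Dense ((Submodule.span ℂ A : Submodule ℂ H) : Set H))
    (f : H) (ρ : ℝ) (hρ0 : 0 < ρ) (hρ1 : ρ ≤ 1)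
    (a : ℕ → H) (ha : ∀ n, a n ∈ A)
    (hQ : ∀ n, Qproj a n (a n) ≠ 0)
    (B : ℕ → H) (hB : ∀ n, B n = (‖Qproj a n (a n)‖ : ℂ)⁻¹ • Qproj a n (a n))
    (g : ℕ → H) (hg : ∀ n, g n = f - ∑ k ∈ Finset.range n, (inner ℂ (B k) f : ℂ) • B k)
    (hsel : ∀ n, ∀ x ∈ A, Qproj a n x ≠ 0 →
      ρ * ‖(inner ℂ (g n) ((‖Qproj a n x‖ : ℂ)⁻¹ • Qproj a n x) : ℂ)‖ ≤
        ‖(inner ℂ (g n) (B n) : ℂ)‖) :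
    Filter.Tendsto (fun n => ∑ k ∈ Finset.range n, (inner ℂ (B k) f : ℂ) • B k)
      Filter.atTop (nhds f) := by
  classical
  set K : ℕ → Submodule ℂ H := fun n => Submodule.span ℂ (a '' Set.Iio n) with hK
  set c : ℕ → ℂ := fun k => (inner ℂ (B k) f : ℂ) with hc
  -- basic properties of B
  have hQnorm : ∀ n, (0:ℝ) < ‖Qproj a n (a n)‖ := fun n => norm_pos_iff.2 (hQ n)
  have hBnorm : ∀ n, ‖B n‖ = 1 := by
    intro n
    rw [hB n, norm_smul]
    simp [norm_inv, (hQnorm n).ne']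
  have hBmemO : ∀ n, B n ∈ (K n)ᗮ := by
    intro n
    rw [hB n]
    exact Submodule.smul_mem _ _ (Qproj_mem_orthogonal a n (a n))
  have hKmono : ∀ {m n : ℕ}, m ≤ n → K m ≤ K n := by
    intro m n hmn
    exact Submodule.span_mono (Set.image_mono (Set.Iio_subset_Iio hmn))
  have hQmem : ∀ k n, k < n → Qproj a k (a k) ∈ K n := by
    intro k n hkn
    have h1 : a k ∈ K n := Submodule.subset_span ⟨k, hkn, rfl⟩
    have h2 : a k - Qproj a k (a k) ∈ K n := hKmono (le_of_lt hkn) (sub_Qproj_mem a k (a k))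
    have := Submodule.sub_mem _ h1 h2
    simpa using this
  have hBmem : ∀ k n, k < n → B k ∈ K n := by
    intro k n hkn
    rw [hB k]
    exact Submodule.smul_mem _ _ (hQmem k n hkn)
  have hON : Orthonormal ℂ B := by
    constructor
    · exact hBnorm
    · intro i j hij
      rcases lt_or_gt_of_ne hij with h | h
      · exact (Submodule.mem_orthogonal _ _).1 (hBmemO j) _ (hBmem i j h)
      · rw [← inner_conj_symm,
          (Submodule.mem_orthogonal _ _).1 (hBmemO i) _ (hBmem j i h), map_zero]
  -- span of the a's is contained in span of the B's
  have hkey : ∀ n k, k < n → a k ∈ Submodule.span ℂ (B '' Set.Iio n) := by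
    intro n k
    induction k using Nat.strong_induction_on with
    | _ k IH =>
      intro hkn
      have h2 : K k ≤ Submodule.span ℂ (B '' Set.Iio n) := by
        rw [hK, Submodule.span_le]
        rintro y ⟨j, hj, rfl⟩
        exact IH j hj (lt_trans hj hkn)
      have h3 : Qproj a k (a k) ∈ Submodule.span ℂ (B '' Set.Iio n) := by
        have hBk : Qproj a k (a k) = (‖Qproj a k (a k)‖ : ℂ) • B k := by
          rw [hB k, smul_smul]
          rw [mul_inv_cancel₀ (by exact_mod_cast (hQnorm k).ne'), one_smul]
        rw [hBk]
        exact Submodule.smul_mem _ _ (Submodule.subset_span ⟨k, hkn, rfl⟩)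
      have := Submodule.add_mem _ (h2 (sub_Qproj_mem a k (a k))) h3
      simpa using this
  -- g n is orthogonal to K n
  have hgB : ∀ n j, j < n → (inner ℂ (B j) (g n) : ℂ) = 0 := by
    intro n j hjn
    rw [hg n, inner_sub_right, hON.inner_right_sum _ (Finset.mem_range.2 hjn), sub_self]
  have horth : ∀ n, ∀ u ∈ K n, (inner ℂ u (g n) : ℂ) = 0 := by
    intro n u hu
    have hu' : u ∈ Submodule.span ℂ (B '' Set.Iio n) := by
      refine Submodule.span_le.2 ?_ hu
      rintro y ⟨j, hj, rfl⟩
      exact hkey n j hj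
    clear hu
    induction hu' using Submodule.span_induction with
    | mem x hx =>
      obtain ⟨j, hj, rfl⟩ := hx
      exact hgB n j hj
    | zero => simp
    | add x y _ _ hx hy => rw [inner_add_left, hx, hy, add_zero]
    | smul t x _ hx => rw [inner_smul_left, hx, mul_zero]
  -- summability
  have hsq : Summable fun k => ‖c k‖ ^ 2 := hON.inner_products_summable f
  have hsum : Summable fun k => c k • B k := by
    have h := (hON.orthogonalFamily.summable_iff_norm_sq_summable c).2 hsq
    simpa [LinearIsometry.toSpanSingleton_apply] using h
  set L : H := ∑' k, c k • B k with hL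
  have hS : Tendsto (fun n => ∑ k ∈ Finset.range n, c k • B k) atTop (nhds L) :=
    hsum.hasSum.tendsto_sum_nat
  have hgL : Tendsto g atTop (nhds (f - L)) := by
    have : g = fun n => f - ∑ k ∈ Finset.range n, c k • B k := funext hg
    rw [this]
    exact hS.const_sub f
  -- the coefficients tend to zero
  have hcoef0 : Tendsto (fun n => ‖c n‖) atTop (nhds 0) := by
    have h2 := hsq.tendsto_atTop_zero
    have := (Real.continuous_sqrt.tendsto 0).comp h2
    simpa [Function.comp_def, Real.sqrt_sq (norm_nonneg _)] using this
  -- ⟪g n, B n⟫ has norm ‖c n‖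
  have hgBn : ∀ n, ‖(inner ℂ (g n) (B n) : ℂ)‖ = ‖c n‖ := by
    intro n
    have h1 : (inner ℂ (B n) (g n) : ℂ) = c n := by
      rw [hg n, inner_sub_right, inner_sum]
      have : ∀ k ∈ Finset.range n, (inner ℂ (B n) ((c k) • B k) : ℂ) = 0 := by
        intro k hk
        rw [inner_smul_right, hON.2 (Finset.mem_range.1 hk).ne', mul_zero]
      rw [Finset.sum_eq_zero this, sub_zero]
    rw [← inner_conj_symm, h1, RCLike.norm_conj]
  -- the crucial bound
  have hbound : ∀ x ∈ A, ∀ n, ‖(inner ℂ (g n) x : ℂ)‖ ≤ ρ⁻¹ * ‖c n‖ := by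
    intro x hx n
    have hgQ : (inner ℂ (g n) x : ℂ) = inner ℂ (g n) (Qproj a n x) := by
      have h0 : (inner ℂ (g n) (x - Qproj a n x) : ℂ) = 0 := by
        rw [← inner_conj_symm, horth n _ (sub_Qproj_mem a n x), map_zero]
      have := inner_sub_right (𝕜 := ℂ) (g n) x (Qproj a n x)
      rw [h0] at this
      linear_combination -this
    by_cases hz : Qproj a n x = 0
    · rw [hgQ, hz, inner_zero_right, norm_zero]
      positivity
    · have hs := hsel n x hx hz
      rw [hgBn n, inner_smul_right, norm_mul] at hs
      have hQx : (0:ℝ) < ‖Qproj a n x‖ := norm_pos_iff.2 hz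
      have hQx1 : ‖Qproj a n x‖ ≤ 1 := by
        rw [← hA1 x hx]
        exact norm_Qproj_le a n x
      have hnn : ‖((‖Qproj a n x‖ : ℂ))⁻¹‖ = ‖Qproj a n x‖⁻¹ := by
        rw [norm_inv]
        simp
      rw [hnn] at hs
      -- hs : ρ * (‖Qproj a n x‖⁻¹ * ‖inner ℂ (g n) (Qproj a n x)‖) ≤ ‖c n‖
      set t : ℝ := ‖(inner ℂ (g n) (Qproj a n x) : ℂ)‖ with ht
      have htnn : 0 ≤ t := norm_nonneg _
      rw [hgQ, ← ht]
      have h1 : ρ * t ≤ ‖Qproj a n x‖ * ‖c n‖ := by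
        have h := mul_le_mul_of_nonneg_left hs (le_of_lt hQx)
        calc ρ * t = ‖Qproj a n x‖ * (ρ * (‖Qproj a n x‖⁻¹ * t)) := by
              field_simp
          _ ≤ ‖Qproj a n x‖ * ‖c n‖ := h
      have h2 : ρ * t ≤ ‖c n‖ := by
        refine h1.trans ?_
        have h := mul_le_mul_of_nonneg_right hQx1 (norm_nonneg (c n))
        simpa using h
      calc t = ρ⁻¹ * (ρ * t) := by field_simp
        _ ≤ ρ⁻¹ * ‖c n‖ := mul_le_mul_of_nonneg_left h2 (inv_nonneg.2 hρ0.le)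
  -- pass to the limit : f - L is orthogonal to every a ∈ A
  have hinner0 : ∀ x ∈ A, (inner ℂ (f - L) x : ℂ) = 0 := by
    intro x hx
    have h1 : Tendsto (fun n => (inner ℂ (g n) x : ℂ)) atTop (nhds (inner ℂ (f - L) x)) :=
      hgL.inner tendsto_const_nhds
    have h2 : Tendsto (fun n => (inner ℂ (g n) x : ℂ)) atTop (nhds 0) := by
      rw [tendsto_zero_iff_norm_tendsto_zero]
      refine squeeze_zero (fun n => norm_nonneg _) (fun n => hbound x hx n) ?_
      simpa using hcoef0.const_mul ρ⁻¹
    exact tendsto_nhds_unique h1 h2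
  -- conclude f = L
  have hfL : f - L = 0 := by
    refine Dense.eq_zero_of_inner_left ℂ hA2 ?_
    intro v hv
    rw [SetLike.mem_coe] at hv
    induction hv using Submodule.span_induction with
    | mem x hx => exact hinner0 x hx
    | zero => simp
    | add x y _ _ hx hy => rw [inner_add_right, hx, hy, add_zero]
    | smul t x _ hx => rw [inner_smul_right, hx, mul_zero]
  have hfeq : f = L := sub_eq_zero.1 hfL
  rw [← hfeq] at hS
  exact hS
end
end
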